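/- Let G be a finite simple graph on vertex set {1,…,n} (no self-loops) in which every vertex has at least one neighbor, with graph Laplacian L. If matrices P, Q ∈ ℝ^{n×d} satisfy L = P Qᵀ, then the column-concatenated matrix [P Q] ∈ ℝ^{n×2d} is both node-identifying and adjacency-identifying. -/

import Mathlib

open Matrix

/-- The unnormalized attention matrix `(1/√d_k)·(P W^Q)(P W^K)ᵀ`. -/
noncomputable def attn {n : ℕ} {m : Type*} [Fintype m] (dk : ℝ)
    (P : Matrix (Fin n) m ℝ) (WQ WK : Matrix m m ℝ) : Matrix (Fin n) (Fin n) ℝ :=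
  (1 / Real.sqrt dk) • ((P * WQ) * (P * WK)ᵀ)

/-- `P` is node-identifying: for some `W^Q, W^K`, the `(i,j)` entry of
`(1/√d_k)·(P W^Q)(P W^K)ᵀ` is a maximum of its row exactly when `i = j`. -/
def IsNodeIdentifying {n : ℕ} {m : Type*} [Fintype m] (dk : ℝ)
    (P : Matrix (Fin n) m ℝ) : Prop :=
  ∃ WQ WK : Matrix m m ℝ, ∀ i j,
    (∀ l, attn dk P WQ WK i l ≤ attn dk P WQ WK i j) ↔ i = j

/-- `P` is adjacency-identifying: for some `W^Q, W^K`, the `(i,j)` entry of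
`(1/√d_k)·(P W^Q)(P W^K)ᵀ` is a maximum of its row exactly when `i` and `j` are adjacent. -/
def IsAdjIdentifying {n : ℕ} {m : Type*} [Fintype m] (dk : ℝ) (G : SimpleGraph (Fin n))
    (P : Matrix (Fin n) m ℝ) : Prop :=
  ∃ WQ WK : Matrix m m ℝ, ∀ i j,
    (∀ l, attn dk P WQ WK i l ≤ attn dk P WQ WK i j) ↔ G.Adj i j

lemma lap_entry {n : ℕ} (G : SimpleGraph (Fin n)) [DecidableRel G.Adj] (i j : Fin n) :
    G.lapMatrix ℝ i j
      = (if i = j then (G.degree i : ℝ) else 0) - (if G.Adj i j then 1 else 0) := by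
  simp [SimpleGraph.lapMatrix, SimpleGraph.degMatrix, SimpleGraph.adjMatrix, Matrix.diagonal_apply]

/-- if the graph Laplacian factors as `L = P Qᵀ`, then the column-wise
concatenation `[P Q]` is both node-identifying and adjacency-identifying. -/
theorem stmt7 {n d : ℕ} (G : SimpleGraph (Fin n)) [DecidableRel G.Adj]
    (hdeg : ∀ v, 0 < G.degree v) (dk : ℝ) (hdk : 0 < dk)
    (P Q : Matrix (Fin n) (Fin d) ℝ)
    (hfac : G.lapMatrix ℝ = P * Qᵀ) :
    IsNodeIdentifying dk (Matrix.fromCols P Q) ∧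
      IsAdjIdentifying dk G (Matrix.fromCols P Q) := by
  have hc : 0 < 1 / Real.sqrt dk := by positivity
  set c := 1 / Real.sqrt dk with hcdef
  -- the two products
  have hprod : ∀ s : ℝ, (Matrix.fromCols P Q * fromBlocks (1 : Matrix (Fin d) (Fin d) ℝ) 0 0 (0 : Matrix (Fin d) (Fin d) ℝ)) *
      (Matrix.fromCols P Q * fromBlocks (0 : Matrix (Fin d) (Fin d) ℝ) (0 : Matrix (Fin d) (Fin d) ℝ) (s • (1 : Matrix (Fin d) (Fin d) ℝ)) (0 : Matrix (Fin d) (Fin d) ℝ))ᵀ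
      = s • (P * Qᵀ) := by
    intro s
    rw [fromCols_mul_fromBlocks, fromCols_mul_fromBlocks]
    simp only [Matrix.mul_zero, Matrix.mul_one, add_zero, zero_add, Matrix.mul_smul,
      Matrix.mul_one]
    rw [transpose_fromCols, fromCols_mul_fromRows]
    simp [Matrix.mul_smul, Matrix.smul_mul]
  constructor
  · refine ⟨fromBlocks 1 0 0 0, fromBlocks 0 0 ((1:ℝ) • 1) 0, ?_⟩
    intro i j
    have hA : attn dk (fromCols P Q) (fromBlocks 1 0 0 0) (fromBlocks 0 0 ((1:ℝ) • 1) 0)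
        = c • (G.lapMatrix ℝ) := by
      unfold attn; rw [hprod, hfac]; simp [hcdef, one_div]
    rw [hA]
    simp only [Matrix.smul_apply, smul_eq_mul]
    constructor
    · intro h
      by_contra hij
      have h1 := h i
      have hLii : G.lapMatrix ℝ i i = (G.degree i : ℝ) := by
        simp [lap_entry]
      have hLij : G.lapMatrix ℝ i j ≤ 0 := by
        rw [lap_entry]
        simp only [if_neg hij]
        split <;> norm_num
      have : (G.degree i : ℝ) ≤ G.lapMatrix ℝ i j := by
        have := (mul_le_mul_iff_right₀ hc).mp h1
        rwa [hLii] at this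
      have := this.trans hLij
      exact absurd this (by exact_mod_cast not_le.mpr (hdeg i))
    · rintro rfl l
      apply mul_le_mul_of_nonneg_left _ hc.le
      rw [lap_entry, lap_entry, if_pos rfl, if_neg (G.loopless.irrefl i), sub_zero]
      have h1 : (if G.Adj i l then (1:ℝ) else 0) ≥ 0 := by split <;> norm_num
      have h2 : (if i = l then (G.degree i : ℝ) else 0) ≤ (G.degree i : ℝ) := by
        split <;> simp
      linarith
  · refine ⟨fromBlocks 1 0 0 0, fromBlocks 0 0 ((-1:ℝ) • 1) 0, ?_⟩
    intro i j
    have hA : attn dk (fromCols P Q) (fromBlocks 1 0 0 0) (fromBlocks 0 0 ((-1:ℝ) • 1) 0)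
        = c • (-(G.lapMatrix ℝ)) := by
      unfold attn; rw [hprod, hfac]; simp [hcdef, one_div]
    rw [hA]
    simp only [Matrix.smul_apply, Matrix.neg_apply, smul_eq_mul]
    have hentry : ∀ l, -(G.lapMatrix ℝ i l)
        = (if G.Adj i l then 1 else 0) - (if i = l then (G.degree i : ℝ) else 0) := by
      intro l; rw [lap_entry]; ring
    constructor
    · intro h
      by_contra hij
      obtain ⟨l0, hl0⟩ := (G.degree_pos_iff_exists_adj i).mp (hdeg i)
      have h1 := h l0
      have hvl0 : -(G.lapMatrix ℝ i l0) = 1 := by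
        rw [hentry]
        rw [if_pos hl0, if_neg (G.ne_of_adj hl0), sub_zero]
      have hvj : -(G.lapMatrix ℝ i j) ≤ 0 := by
        rw [hentry, if_neg hij]
        have : (0:ℝ) ≤ if i = j then (G.degree i : ℝ) else 0 := by
          split <;> simp
        linarith
      have := (mul_le_mul_iff_right₀ hc).mp h1
      rw [hvl0] at this
      linarith [this.trans hvj]
    · intro hadj l
      apply mul_le_mul_of_nonneg_left _ hc.le
      rw [hentry, hentry, if_pos hadj, if_neg (G.ne_of_adj hadj), sub_zero]
      have h1 : (if G.Adj i l then (1:ℝ) else 0) ≤ 1 := by split <;> norm_num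
      have h2 : (0:ℝ) ≤ if i = l then (G.degree i : ℝ) else 0 := by split <;> simp
      linarith
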